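/- If g₁ and g₂ are glides in the extended affine symmetric group with offsets k₁ and k₂ respectively, then g₂g₁ = ρ^{k₂}(g₁)·ρ^{-k₁}(g₂), where ρ is the automorphism shifting Coxeter generator indices by 1. -/
import Mathlib


/-- In the extended affine symmetric group (modeled as a group `G` with a projection
`φ` to permutations of `ZMod n`, whose kernel — the translations — is commutative,
and an element `τ` with `φ τ` the rotation by `1`, realizing the index-shift
automorphism `ρ` as conjugation by `τ`), if `g₁, g₂` are glides of offsets
`k₁, k₂` (i.e. `φ gᵢ` is rotation by `kᵢ`), then
`g₂ g₁ = ρ^{k₂}(g₁) · ρ^{-k₁}(g₂)`. -/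
theorem glide_commutation {G : Type*} [Group G] (n : ℕ) [NeZero n]
    (φ : G →* Equiv.Perm (ZMod n))
    (hker : ∀ x y : G, φ x = 1 → φ y = 1 → x * y = y * x)
    (τ : G) (hτ : φ τ = Equiv.addRight (1 : ZMod n))
    (g₁ g₂ : G) (k₁ k₂ : ℤ)
    (hg₁ : φ g₁ = Equiv.addRight (k₁ : ZMod n))
    (hg₂ : φ g₂ = Equiv.addRight (k₂ : ZMod n)) :
    g₂ * g₁ = (τ ^ k₂ * g₁ * τ ^ (-k₂)) * (τ ^ (-k₁) * g₂ * τ ^ k₁) := by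
  have hτk : ∀ k : ℤ, φ (τ ^ k) = Equiv.addRight ((k : ZMod n)) := by
    intro k
    rw [map_zpow, hτ]
    ext x
    simp [Equiv.Perm.zpow_apply_comm]
  have h1 : φ (g₁ * τ ^ (-k₁)) = 1 := by
    rw [map_mul, hg₁, hτk]
    ext x
    simp [Equiv.Perm.mul_apply]
  have h2 : φ (g₂ * τ ^ (-k₂)) = 1 := by
    rw [map_mul, hg₂, hτk]
    ext x
    simp [Equiv.Perm.mul_apply]
  have h3 : φ (τ ^ k₂ * (g₁ * τ ^ (-k₁)) * τ ^ (-k₂)) = 1 := by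
    rw [map_mul, map_mul, h1, hτk, hτk]
    ext x
    simp [Equiv.Perm.mul_apply]
  have hc := hker _ _ h3 h2
  have e1 : g₁ = (g₁ * τ ^ (-k₁)) * τ ^ k₁ := by group
  have e2 : g₂ = (g₂ * τ ^ (-k₂)) * τ ^ k₂ := by group
  set a := g₁ * τ ^ (-k₁)
  set b := g₂ * τ ^ (-k₂)
  rw [e1, e2]
  calc b * τ ^ k₂ * (a * τ ^ k₁)
      = b * (τ ^ k₂ * a * τ ^ (-k₂)) * (τ ^ k₂ * τ ^ k₁) := by group
    _ = (τ ^ k₂ * a * τ ^ (-k₂)) * b * (τ ^ k₂ * τ ^ k₁) := by rw [← hc]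
    _ = τ ^ k₂ * (a * τ ^ k₁) * τ ^ (-k₂) * (τ ^ (-k₁) * (b * τ ^ k₂) * τ ^ k₁) := by group
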